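/- Let Z_{n,k} be the random variable with P(Z_{n,k} = j) = C(j+k,k) C(n-j,k) / C(n+k+1, 2k+1) for 0 ≤ j ≤ n-k. Then E(Z_{n,k}) = (n-k)/2 and Var(Z_{n,k}) = (n-k)(n+k+2)/(4(2k+3)). -/

import Mathlib

open Finset

lemma hockey (r : ℕ) : ∀ m, ∑ i ∈ range (m+1), i.choose r = (m+1).choose (r+1)
  | 0 => by
      rw [Finset.sum_range_one]
      match r with
      | 0 => rfl
      | r+1 => simp [Nat.choose_eq_zero_of_lt (show 1 < r+1+1 by omega)]
  | m+1 => by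
      rw [Finset.sum_range_succ, hockey r m, Nat.choose_succ_succ (m+1) r, Nat.add_comm]

lemma dv (s : ℕ) : ∀ (m r : ℕ),
    ∑ i ∈ range (m+1), i.choose r * (m - i).choose s = (m+1).choose (r+s+1) := by
  induction s with
  | zero =>
      intro m r
      simpa using hockey r m
  | succ s ih =>
      intro m r
      induction m with
      | zero =>
          rw [Finset.sum_range_one]
          simp [Nat.choose_eq_zero_of_lt (show 1 < r+(s+1)+1 by omega)]
      | succ m ihm =>
          rw [Finset.sum_range_succ]
          have h1 : ∑ i ∈ range (m+1), i.choose r * (m+1-i).choose (s+1)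
              = ∑ i ∈ range (m+1), (i.choose r * (m-i).choose s
                  + i.choose r * (m-i).choose (s+1)) := by
            refine Finset.sum_congr rfl fun i hi => ?_
            have h : m + 1 - i = (m - i) + 1 := by
              have := Finset.mem_range.mp hi; omega
            rw [h, Nat.choose_succ_succ, Nat.mul_add]
          rw [h1, Finset.sum_add_distrib, ihm, ih m r]
          have h2 : (m+1+1).choose (r+(s+1)+1) = (m+1).choose (r+s+1) + (m+1).choose (r+(s+1)+1) := by
            rw [show r+(s+1)+1 = (r+s+1)+1 by ring, Nat.choose_succ_succ]
          simp [h2]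

lemma sum_head_zero (f : ℕ → ℕ) (a b : ℕ) (h : ∀ i < a, f i = 0) :
    ∑ i ∈ range (a+b), f i = ∑ j ∈ range b, f (a+j) := by
  rw [Finset.sum_range_add]
  have : ∑ i ∈ range a, f i = 0 :=
    Finset.sum_eq_zero fun i hi => h i (Finset.mem_range.mp hi)
  rw [this, zero_add]

lemma sum_tail_zero (f : ℕ → ℕ) (a b : ℕ) (h : ∀ i, a ≤ i → i < a + b → f i = 0) :
    ∑ i ∈ range (a+b), f i = ∑ j ∈ range a, f j := by
  rw [Finset.sum_range_add]
  have : ∑ i ∈ range b, f (a+i) = 0 :=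
    Finset.sum_eq_zero fun i hi =>
      h (a+i) (Nat.le_add_right a i) (by have := Finset.mem_range.mp hi; omega)
  rw [this, add_zero]

lemma L0 (n k : ℕ) (hkn : k ≤ n) :
    ∑ j ∈ range (n-k+1), (j+k).choose k * (n-j).choose k = (n+k+1).choose (2*k+1) := by
  have base := dv k (n+k) k
  have e1 : n + k + 1 = k + (n+1) := by omega
  rw [e1] at base
  rw [sum_head_zero _ k (n+1) (fun i hi => by
    simp [Nat.choose_eq_zero_of_lt hi])] at base
  have e2 : n + 1 = (n-k+1) + k := by omega
  rw [e2] at base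
  rw [sum_tail_zero _ (n-k+1) k (fun j hj1 hj2 => by
    have : (n + k - (k + j)).choose k = 0 := Nat.choose_eq_zero_of_lt (by omega)
    simp [this])] at base
  have e3 : k + (n - k + 1 + k) = n + k + 1 := by omega
  rw [e3] at base
  have e4 : 2*k+1 = k + k + 1 := by omega
  rw [e4, ← base]
  refine Finset.sum_congr rfl fun j hj => ?_
  have hj' : j ≤ n - k := by have := Finset.mem_range.mp hj; omega
  have h5 : n + k - (k + j) = n - j := by omega
  rw [h5, Nat.add_comm k j]

lemma L2 (n k : ℕ) (hkn : k ≤ n) :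
    ∑ j ∈ range (n-k+1), (j+k+1).choose (k+1) * (n+1-j).choose (k+1)
      = (n+k+3).choose (2*k+3) := by
  have base := dv (k+1) (n+k+2) (k+1)
  have e1 : n + k + 2 + 1 = (k+1) + (n+2) := by omega
  rw [e1] at base
  rw [sum_head_zero _ (k+1) (n+2) (fun i hi => by
    simp [Nat.choose_eq_zero_of_lt hi])] at base
  have e2 : n + 2 = (n-k+1) + (k+1) := by omega
  rw [e2] at base
  rw [sum_tail_zero _ (n-k+1) (k+1) (fun j hj1 hj2 => by
    have : (n + k + 2 - (k + 1 + j)).choose (k+1) = 0 := Nat.choose_eq_zero_of_lt (by omega)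
    simp [this])] at base
  have e3 : k + 1 + (n - k + 1 + (k + 1)) = n + k + 3 := by omega
  rw [e3] at base
  have e4 : 2*k+3 = (k+1) + (k+1) + 1 := by omega
  rw [e4, ← base]
  refine Finset.sum_congr rfl fun j hj => ?_
  have hj' : j ≤ n - k := by have := Finset.mem_range.mp hj; omega
  have h5 : n + k + 2 - (k + 1 + j) = n + 1 - j := by omega
  have h6 : k + 1 + j = j + k + 1 := by omega
  rw [h5, h6]

lemma Lratio (n k : ℕ) :
    (2*k+2) * ((2*k+3) * (n+k+3).choose (2*k+3))
      = (n+k+2) * ((n+k+3) * (n+k+1).choose (2*k+1)) := by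
  have h1 := Nat.add_one_mul_choose_eq (n+k+1) (2*k+1)
  have h2 := Nat.add_one_mul_choose_eq (n+k+2) (2*k+2)
  rw [show n+k+1+1 = n+k+2 by omega, show 2*k+1+1 = 2*k+2 by omega] at h1
  rw [show n+k+2+1 = n+k+3 by omega, show 2*k+2+1 = 2*k+3 by omega] at h2
  calc (2*k+2) * ((2*k+3) * (n+k+3).choose (2*k+3))
      = (2*k+2) * ((n+k+3) * (n+k+2).choose (2*k+2)) := by rw [h2]; ring
    _ = (n+k+3) * ((n+k+2) * (n+k+1).choose (2*k+1)) := by rw [h1]; ring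
    _ = (n+k+2) * ((n+k+3) * (n+k+1).choose (2*k+1)) := by ring

theorem stmt16 (n k : ℕ) (hkn : k ≤ n) :
    (∑ j ∈ Finset.range (n - k + 1),
        (j : ℝ) * ((j + k).choose k * (n - j).choose k : ℕ)
          / ((n + k + 1).choose (2 * k + 1) : ℕ)) = ((n : ℝ) - k) / 2 ∧
    (∑ j ∈ Finset.range (n - k + 1),
        ((j : ℝ) - ((n : ℝ) - k) / 2) ^ 2 *
          ((j + k).choose k * (n - j).choose k : ℕ)
          / ((n + k + 1).choose (2 * k + 1) : ℕ)) =
      ((n : ℝ) - k) * ((n : ℝ) + k + 2) / (4 * (2 * (k : ℝ) + 3)) := by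
  have hDpos : (0:ℝ) < (((n + k + 1).choose (2 * k + 1) : ℕ) : ℝ) := by
    exact_mod_cast Nat.choose_pos (show 2*k+1 ≤ n+k+1 by omega)
  have hDne : (((n + k + 1).choose (2 * k + 1) : ℕ) : ℝ) ≠ 0 := ne_of_gt hDpos
  have hA : (∑ j ∈ range (n-k+1), (((j + k).choose k * (n - j).choose k : ℕ) : ℝ))
      = (((n + k + 1).choose (2 * k + 1) : ℕ) : ℝ) := by
    exact_mod_cast congrArg (Nat.cast : ℕ → ℝ) (L0 n k hkn)
  have hG : (∑ j ∈ range (n-k+1), (((j + k + 1).choose (k+1) * ((n+1-j).choose (k+1)) : ℕ) : ℝ))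
      = (((n + k + 3).choose (2 * k + 3) : ℕ) : ℝ) := by
    exact_mod_cast congrArg (Nat.cast : ℕ → ℝ) (L2 n k hkn)
  -- mean identity
  have hB : 2 * (∑ j ∈ range (n-k+1), (j:ℝ) * (((j + k).choose k * (n - j).choose k : ℕ):ℝ))
      = ((n:ℝ) - k) * (∑ j ∈ range (n-k+1), (((j + k).choose k * (n - j).choose k : ℕ):ℝ)) := by
    have hrefl := Finset.sum_range_reflect
      (fun j => (j:ℝ) * (((j + k).choose k * (n - j).choose k : ℕ):ℝ)) (n-k+1)
    have hper : ∀ j ∈ range (n-k+1),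
        ((n-k+1-1-j : ℕ):ℝ) * ((((n-k+1-1-j) + k).choose k * (n - (n-k+1-1-j)).choose k : ℕ):ℝ)
        = ((n:ℝ) - k - j) * (((j + k).choose k * (n - j).choose k : ℕ):ℝ) := by
      intro j hj
      have hj' : j ≤ n - k := by have := Finset.mem_range.mp hj; omega
      have e1 : (n-k+1-1-j) + k = n - j := by omega
      have e2 : n - (n-k+1-1-j) = j + k := by omega
      have e3 : ((n-k+1-1-j : ℕ):ℝ) = (n:ℝ) - k - j := by
        rw [show n-k+1-1-j = n-k-j by omega,
          Nat.cast_sub (show j ≤ n - k from hj'), Nat.cast_sub hkn]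
      rw [e1, e2, e3, Nat.mul_comm]
    have h5 := (Finset.sum_congr rfl hper).symm.trans hrefl
    have h6 : ∑ j ∈ range (n-k+1), ((n:ℝ) - k - j) * (((j + k).choose k * (n - j).choose k : ℕ):ℝ)
        = ((n:ℝ) - k) * (∑ j ∈ range (n-k+1), (((j + k).choose k * (n - j).choose k : ℕ):ℝ))
          - ∑ j ∈ range (n-k+1), (j:ℝ) * (((j + k).choose k * (n - j).choose k : ℕ):ℝ) := by
      rw [Finset.mul_sum, ← Finset.sum_sub_distrib]
      exact Finset.sum_congr rfl fun j _ => by ring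
    rw [h6] at h5
    linarith [h5]
  -- second moment identity
  have hC : (∑ j ∈ range (n-k+1), (j:ℝ)^2 * (((j + k).choose k * (n - j).choose k : ℕ):ℝ))
        + ((k:ℝ)+1)^2 * (∑ j ∈ range (n-k+1), (((j + k + 1).choose (k+1) * ((n+1-j).choose (k+1)) : ℕ):ℝ))
      = ((n:ℝ) - k) * (∑ j ∈ range (n-k+1), (j:ℝ) * (((j + k).choose k * (n - j).choose k : ℕ):ℝ))
        + ((k:ℝ)+1) * ((n:ℝ)+1) * (∑ j ∈ range (n-k+1), (((j + k).choose k * (n - j).choose k : ℕ):ℝ)) := by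
    rw [Finset.mul_sum, Finset.mul_sum, Finset.mul_sum, ← Finset.sum_add_distrib,
      ← Finset.sum_add_distrib]
    refine Finset.sum_congr rfl fun j hj => ?_
    have hj' : j ≤ n - k := by have := Finset.mem_range.mp hj; omega
    have hjn : j ≤ n := by omega
    have h1 : ((j:ℝ) + k + 1) * (((j + k).choose k : ℕ):ℝ)
        = (((j + k + 1).choose (k+1) : ℕ):ℝ) * ((k:ℝ)+1) := by
      have := Nat.add_one_mul_choose_eq (j+k) k
      have := congrArg (Nat.cast : ℕ → ℝ) this
      push_cast at this
      linarith [this]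
    have h2 : ((n:ℝ) - j + 1) * (((n - j).choose k : ℕ):ℝ)
        = (((n + 1 - j).choose (k+1) : ℕ):ℝ) * ((k:ℝ)+1) := by
      have h := Nat.add_one_mul_choose_eq (n-j) k
      rw [show n - j + 1 = n + 1 - j by omega] at h
      have := congrArg (Nat.cast : ℕ → ℝ) h
      push_cast [Nat.cast_sub hjn, Nat.cast_sub (show j ≤ n + 1 by omega)] at this
      linarith [this]
    have key : ((k:ℝ)+1)^2 * (((j + k + 1).choose (k+1) * ((n+1-j).choose (k+1)) : ℕ):ℝ)
        = ((j:ℝ) + k + 1) * (((n:ℝ) - j + 1) * (((j + k).choose k * (n - j).choose k : ℕ):ℝ)) := by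
      push_cast
      linear_combination (-(((n:ℝ) - j + 1)) * (((n - j).choose k : ℕ):ℝ)) * h1
        - (((k:ℝ)+1) * (((j + k + 1).choose (k+1) : ℕ):ℝ)) * h2
    linear_combination key
  -- ratio
  have hUD : (2*(k:ℝ)+2) * ((2*(k:ℝ)+3) * (((n + k + 3).choose (2 * k + 3) : ℕ):ℝ))
      = ((n:ℝ)+k+2) * (((n:ℝ)+k+3) * (((n + k + 1).choose (2 * k + 1) : ℕ):ℝ)) := by
    have := congrArg (Nat.cast : ℕ → ℝ) (Lratio n k)
    push_cast at this
    linarith [this]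
  rw [hG] at hC
  rw [hA] at hB hC
  -- goal 1
  have goal1 : (∑ j ∈ Finset.range (n - k + 1),
      (j : ℝ) * ((j + k).choose k * (n - j).choose k : ℕ)
        / ((n + k + 1).choose (2 * k + 1) : ℕ)) = ((n : ℝ) - k) / 2 := by
    rw [← Finset.sum_div]
    rw [div_eq_iff hDne]
    linarith [hB]
  refine ⟨goal1, ?_⟩
  -- goal 2
  rw [← Finset.sum_div, div_eq_div_iff hDne (by positivity : (4 * (2 * (k:ℝ) + 3)) ≠ 0)]
  have hexp : (∑ j ∈ Finset.range (n - k + 1),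
      ((j : ℝ) - ((n : ℝ) - k) / 2) ^ 2 * (((j + k).choose k * (n - j).choose k : ℕ):ℝ))
      = (∑ j ∈ range (n-k+1), (j:ℝ)^2 * (((j + k).choose k * (n - j).choose k : ℕ):ℝ))
        - ((n:ℝ)-k) * (∑ j ∈ range (n-k+1), (j:ℝ) * (((j + k).choose k * (n - j).choose k : ℕ):ℝ))
        + ((n:ℝ)-k)^2/4 * (∑ j ∈ range (n-k+1), (((j + k).choose k * (n - j).choose k : ℕ):ℝ)) := by
    rw [Finset.mul_sum, Finset.mul_sum, ← Finset.sum_sub_distrib, ← Finset.sum_add_distrib]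
    exact Finset.sum_congr rfl fun j _ => by ring
  rw [hexp, hA]
  nlinarith [hB, hC, hUD, hDpos, sq_nonneg ((n:ℝ)-k)]
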